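/- φ has a satisfying assignment (∃ Z, φ Z) if and only if there exists a finset X with X ∈ F', X ∈ G' and X.card = n + I (i.e. X has size |S'| − n, consisting of a satisfying truth assignment together with all I padding elements). -/

import Mathlib

open Sum

/-- `φ` has a satisfying assignment iff the intersection `F' ∩ G'`
of the padded construction contains a set of size `n + I` (i.e. `|S'| − n`). -/
theorem sat_iff_padded_intersection (n I : ℕ) (hn : 1 ≤ n) (hI : 1 ≤ I)
    (φ : (Fin n → Bool) → Prop)
    (ℓ : Fin n) (hℓ : (ℓ : ℕ) = n - 1)
    (F' A B C G' : Set (Finset ((Fin n × Bool) ⊕ Fin I)))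
    (hF' : F' = {X : Finset ((Fin n × Bool) ⊕ Fin I) |
      ∀ i : Fin n, ¬(inl (i, true) ∈ X ∧ inl (i, false) ∈ X)})
    (hA : A = {X : Finset ((Fin n × Bool) ⊕ Fin I) |
      (∀ x ∈ X, ∃ p : Fin n × Bool, x = inl p) ∧ X.card ≤ n ∧
      inl (ℓ, true) ∉ X ∧ inl (ℓ, false) ∉ X})
    (hB : B = {X : Finset ((Fin n × Bool) ⊕ Fin I) |
      (∀ x ∈ X, ∃ p : Fin n × Bool, x = inl p) ∧ X.card = n ∧
      (∀ i : Fin n, (inl (i, true) ∈ X ∨ inl (i, false) ∈ X) ∧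
        ¬(inl (i, true) ∈ X ∧ inl (i, false) ∈ X)) ∧
      φ (fun i => decide (inl (i, true) ∈ X))})
    (hC : C = {X : Finset ((Fin n × Bool) ⊕ Fin I) |
      ∃ Y ∈ A ∪ B, ∃ Q : Finset ((Fin n × Bool) ⊕ Fin I),
        Y.card = n ∧ Q.Nonempty ∧ (∀ x ∈ Q, ∃ j : Fin I, x = inr j) ∧
        X = Y ∪ Q})
    (hG' : G' = A ∪ B ∪ C) :
    (∃ Z : Fin n → Bool, φ Z) ↔
      ∃ X : Finset ((Fin n × Bool) ⊕ Fin I),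
        X ∈ F' ∧ X ∈ G' ∧ X.card = n + I := by
  subst hF' hA hB hC hG'
  constructor
  · rintro ⟨Z, hZ⟩
    set Y : Finset ((Fin n × Bool) ⊕ Fin I) :=
      Finset.univ.image (fun i : Fin n => inl (i, Z i)) with hYdef
    set Q : Finset ((Fin n × Bool) ⊕ Fin I) :=
      Finset.univ.image inr with hQdef
    have hmemY : ∀ (i : Fin n) (b : Bool), inl (i, b) ∈ Y ↔ Z i = b := by
      intro i b
      simp only [hYdef, Finset.mem_image, Finset.mem_univ, true_and,
        Sum.inl.injEq, Prod.mk.injEq]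
      constructor
      · rintro ⟨j, rfl, h⟩; exact h
      · intro h; exact ⟨i, rfl, h⟩
    have hYcard : Y.card = n := by
      rw [hYdef, Finset.card_image_of_injective _ ?_, Finset.card_univ, Fintype.card_fin]
      intro a b h
      have h' : a = b ∧ Z a = Z b := by simpa using h
      exact h'.1
    have hQcard : Q.card = I := by
      rw [hQdef, Finset.card_image_of_injective _ Sum.inr_injective,
        Finset.card_univ, Fintype.card_fin]
    have hdisj : Disjoint Y Q := by
      rw [Finset.disjoint_left]
      intro x hx hx'
      simp only [hYdef, hQdef, Finset.mem_image, Finset.mem_univ, true_and] at hx hx'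
      obtain ⟨j, rfl⟩ := hx; obtain ⟨k, hk⟩ := hx'
      cases hk
    have hinlQ : ∀ (p : Fin n × Bool), (inl p : (Fin n × Bool) ⊕ Fin I) ∉ Q := by
      intro p hp
      simp only [hQdef, Finset.mem_image, Finset.mem_univ, true_and] at hp
      obtain ⟨k, hk⟩ := hp; cases hk
    have hmemX : ∀ (i : Fin n) (b : Bool), inl (i, b) ∈ Y ∪ Q ↔ Z i = b := by
      intro i b
      rw [Finset.mem_union, hmemY]
      constructor
      · rintro (h | h); · exact h
        · exact absurd h (hinlQ _)
      · exact Or.inl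
    have hYB : Y ∈ {X : Finset ((Fin n × Bool) ⊕ Fin I) |
      (∀ x ∈ X, ∃ p : Fin n × Bool, x = inl p) ∧ X.card = n ∧
      (∀ i : Fin n, (inl (i, true) ∈ X ∨ inl (i, false) ∈ X) ∧
        ¬(inl (i, true) ∈ X ∧ inl (i, false) ∈ X)) ∧
      φ (fun i => decide (inl (i, true) ∈ X))} := by
      refine ⟨?_, hYcard, ?_, ?_⟩
      · intro x hx
        simp only [hYdef, Finset.mem_image, Finset.mem_univ, true_and] at hx
        obtain ⟨j, rfl⟩ := hx; exact ⟨_, rfl⟩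
      · intro i
        constructor
        · rcases h : Z i with _ | _
          · exact Or.inr ((hmemY i false).2 h)
          · exact Or.inl ((hmemY i true).2 h)
        · rintro ⟨h1, h2⟩
          rw [hmemY] at h1 h2
          simp [h1] at h2
      · have : (fun i => decide (inl (i, true) ∈ Y)) = Z := by
          funext i
          rcases h : Z i with _ | _ <;> simp [hmemY, h]
        rw [this]; exact hZ
    refine ⟨Y ∪ Q, ?_, ?_, ?_⟩
    · intro i ⟨h1, h2⟩
      rw [hmemX] at h1 h2
      simp [h1] at h2
    · refine Or.inr ⟨Y, Or.inr hYB, Q, hYcard, ?_, ?_, rfl⟩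
      · exact ⟨inr ⟨0, hI⟩, by simp [hQdef]⟩
      · intro x hx
        simp only [hQdef, Finset.mem_image, Finset.mem_univ, true_and] at hx
        obtain ⟨j, rfl⟩ := hx; exact ⟨j, rfl⟩
    · rw [Finset.card_union_of_disjoint hdisj, hYcard, hQcard]
  · rintro ⟨X, hXF, hXG, hXcard⟩
    rcases hXG with (hXA | hXB) | hXC
    · exfalso; have := hXA.2.1; omega
    · exfalso; have := hXB.2.1; omega
    · obtain ⟨Y, hY, Q, hYcard, hQne, hQinr, rfl⟩ := hXC
      rcases hY with hYA | hYB
      · -- Y ∈ A with card n: contradiction via pigeonhole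
        exfalso
        obtain ⟨hYinl, _, hYt, hYf⟩ := hYA
        have hYsub : Y ⊆ Y ∪ Q := Finset.subset_union_left
        have hle : Y.card ≤ (Finset.univ.erase ℓ : Finset (Fin n)).card := by
          apply Finset.card_le_card_of_injOn
            (fun x => Sum.elim Prod.fst (fun _ => ℓ) x)
          · intro x hx
            obtain ⟨⟨i, b⟩, rfl⟩ := hYinl x hx
            simp only [Sum.elim_inl, Finset.mem_coe, Finset.mem_erase, Finset.mem_univ, and_true]
            rintro rfl
            rcases b with _ | _
            · exact hYf hx
            · exact hYt hx
          · intro x hx y hy hxy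
            obtain ⟨⟨i, b⟩, rfl⟩ := hYinl x hx
            obtain ⟨⟨j, c⟩, rfl⟩ := hYinl y hy
            simp only [Sum.elim_inl] at hxy
            subst hxy
            rcases b with _ | _ <;> rcases c with _ | _
            · rfl
            · exact absurd ⟨hYsub hy, hYsub hx⟩ (hXF i)
            · exact absurd ⟨hYsub hx, hYsub hy⟩ (hXF i)
            · rfl
        rw [hYcard, Finset.card_erase_of_mem (Finset.mem_univ ℓ),
          Finset.card_univ, Fintype.card_fin] at hle
        omega
      · exact ⟨_, hYB.2.2.2⟩
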